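/- Let θ > 0 be real and z ∈ ℂ with Re z < 0 and |Im z| < π. Then ∫_{−∞}^∞ log(1 + e^{θξ}) / (1 + e^{ξ − z}) dξ = −θ · Li₂(−e^z) + ∫_0^∞ log(1 + e^{−θξ}) · ( 1/(1 + e^{ξ − z}) + 1/(1 + e^{−ξ − z}) ) dξ, where both integrals converge absolutely and Li₂(−e^z) = ∑_{j=1}^∞ (−e^z)^j / j² (the series converges since |e^z| < 1). -/

import Mathlib

open MeasureTheory Real Filter Set

/-- The dilogarithm `Li₂(w) = ∑_{j ≥ 1} w^j / j²`. -/
noncomputable def Li2 (w : ℂ) : ℂ := ∑' j : ℕ, w ^ (j + 1) / ((j : ℂ) + 1) ^ 2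

section Aux
lemma aux_ne (w : ℂ) (hw : |w.im| < π) : 1 + Complex.exp w ≠ 0 := by
  intro h0
  have he : Complex.exp w = Complex.exp (π * Complex.I) := by
    rw [Complex.exp_pi_mul_I]; linear_combination h0
  rw [Complex.exp_eq_exp_iff_exists_int] at he
  obtain ⟨n, hn⟩ := he
  have him : w.im = π + n * (2 * π) := by
    rw [hn]; simp [Complex.add_im, Complex.mul_im, Complex.mul_re]
  rw [him] at hw
  rcases le_or_gt 0 (n:ℝ) with h | h
  · have hge : |π + (n:ℝ) * (2*π)| ≥ π := by
      rw [abs_of_nonneg (by positivity)]; nlinarith [pi_pos]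
    linarith
  · have h0' : n < 0 := by exact_mod_cast h
    have h' : (n:ℝ) ≤ -1 := by exact_mod_cast (by omega : n ≤ -1)
    have hge : |π + (n:ℝ) * (2*π)| ≥ π := by
      rw [abs_of_nonpos (by nlinarith [pi_pos])]; nlinarith [pi_pos]
    linarith
lemma aux_lb {y : ℝ} (hy : |y| < π) :
    ∃ δ : ℝ, 0 < δ ∧ δ ≤ 1 ∧ ∀ w : ℂ, w.im = y →
      δ * max 1 (Real.exp w.re) ≤ ‖1 + Complex.exp w‖ := by
  set d : ℝ := if y = 0 then 1 else |Real.sin y| with hd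
  have hd0 : 0 < d := by
    rcases eq_or_ne y 0 with h | h
    · simp [hd, h]
    · simp only [hd, if_neg h, abs_pos]
      intro hs
      rcases Real.sin_eq_zero_iff.mp hs with ⟨n, hn⟩
      rcases abs_lt.mp hy with ⟨h1, h2⟩
      have : n = 0 := by
        by_contra hn0
        rcases lt_or_gt_of_ne hn0 with hlt | hgt
        · have : (n:ℝ) ≤ -1 := by exact_mod_cast (by omega : n ≤ -1)
          nlinarith [pi_pos]
        · have : (1:ℝ) ≤ n := by exact_mod_cast hgt
          nlinarith [pi_pos]
      exact h (by simp [this] at hn; linarith)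
  have hd1 : d ≤ 1 := by
    rcases eq_or_ne y 0 with h | h
    · simp [hd, h]
    · simp only [hd, if_neg h]
      rw [abs_le]; constructor <;> nlinarith [Real.neg_one_le_sin y, Real.sin_le_one y]
  refine ⟨d, hd0, hd1, fun w hw => ?_⟩
  set r := Real.exp w.re with hr
  have hr0 : 0 < r := Real.exp_pos _
  have habs : ‖1 + Complex.exp w‖ ^ 2
      = (1 + r * Real.cos y) ^ 2 + (r * Real.sin y) ^ 2 := by
    rw [Complex.sq_norm, Complex.normSq_apply]
    simp only [Complex.add_re, Complex.add_im, Complex.one_re, Complex.one_im,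
      Complex.exp_re, Complex.exp_im, hw, ← hr]
    ring
  have hpy : Real.sin y ^ 2 + Real.cos y ^ 2 = 1 := Real.sin_sq_add_cos_sq y
  have hds : d ^ 2 ≤ Real.sin y ^ 2 ∨ y = 0 := by
    rcases eq_or_ne y 0 with h | h
    · right; exact h
    · left; simp [hd, if_neg h, sq_abs]
  have hsq : (d * max 1 r) ^ 2 ≤ ‖1 + Complex.exp w‖ ^ 2 := by
    rw [habs, mul_pow]
    rcases hds with h1 | hy0
    · rcases le_total r 1 with hle | hle
      · rw [max_eq_left (by linarith), one_pow, mul_one]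
        nlinarith [sq_nonneg (r + Real.cos y)]
      · rw [max_eq_right (by linarith)]
        nlinarith [sq_nonneg (1 + r * Real.cos y), sq_nonneg d, sq_nonneg r]
    · subst hy0
      have hdeq : d = 1 := by simp [hd]
      rw [hdeq]
      simp only [Real.sin_zero, Real.cos_zero, mul_one, mul_zero]
      rcases le_total r 1 with hle | hle
      · rw [max_eq_left (by linarith)]
        nlinarith
      · rw [max_eq_right (by linarith)]
        nlinarith
  have h1 : 0 ≤ d * max 1 r := by positivity
  calc d * max 1 r = Real.sqrt ((d * max 1 r) ^ 2) := (Real.sqrt_sq h1).symm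
    _ ≤ Real.sqrt (‖1 + Complex.exp w‖ ^ 2) := Real.sqrt_le_sqrt hsq
    _ = ‖1 + Complex.exp w‖ := Real.sqrt_sq (norm_nonneg _)
lemma aux_xexp_int {a : ℝ} (ha : 0 < a) :
    IntegrableOn (fun x : ℝ => x * Real.exp (-(a * x))) (Ioi 0) := by
  have hg : IntegrableOn (fun x : ℝ => (2/a) * Real.exp (-(a/2) * x)) (Ioi 0) :=
    (exp_neg_integrableOn_Ioi 0 (by linarith)).const_mul _
  refine Integrable.mono' hg ?_ ?_
  · exact (continuous_id.mul (Real.continuous_exp.comp (by continuity))).aestronglyMeasurable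
  · filter_upwards [ae_restrict_mem measurableSet_Ioi] with x hx
    have hx0 : (0:ℝ) < x := hx
    rw [Real.norm_eq_abs, abs_of_nonneg (by positivity)]
    have h1 : x ≤ (2/a) * Real.exp ((a/2) * x) := by
      have := Real.add_one_le_exp ((a/2) * x)
      rw [div_mul_eq_mul_div, le_div_iff₀ ha]
      nlinarith [Real.exp_pos ((a/2)*x)]
    calc x * Real.exp (-(a*x)) ≤ ((2/a) * Real.exp ((a/2)*x)) * Real.exp (-(a*x)) := by
          apply mul_le_mul_of_nonneg_right h1 (Real.exp_pos _).le
      _ = (2/a) * Real.exp (-(a/2) * x) := by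
          rw [mul_assoc, ← Real.exp_add]; ring_nf

lemma aux_xexp_val {a : ℝ} (ha : 0 < a) :
    ∫ x in Ioi (0:ℝ), x * Real.exp (-(a * x)) = 1 / a ^ 2 := by
  have hderiv : ∀ x ∈ Ici (0:ℝ), HasDerivAt
      (fun x : ℝ => -(x / a) * Real.exp (-(a * x)) - (1 / a ^ 2) * Real.exp (-(a * x)))
      (x * Real.exp (-(a * x))) x := by
    intro x _
    have h1 : HasDerivAt (fun x : ℝ => Real.exp (-(a * x))) (-a * Real.exp (-(a*x))) x := by
      have := (Real.hasDerivAt_exp (-(a*x))).comp x (by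
        simpa using ((hasDerivAt_id x).const_mul a).neg)
      exact this.congr_deriv (by simp <;> ring)
    have h2 : HasDerivAt (fun x : ℝ => -(x / a)) (-(1/a)) x := by
      exact ((hasDerivAt_id x).div_const a).neg
    have := ((h2.mul h1).sub (h1.const_mul (1 / a ^ 2)))
    refine this.congr_deriv ?_
    field_simp
    ring
  have htend : Tendsto (fun x : ℝ => -(x / a) * Real.exp (-(a * x)) - (1 / a ^ 2) * Real.exp (-(a * x)))
      atTop (nhds 0) := by
    have t1 : Tendsto (fun x : ℝ => x * Real.exp (-x)) atTop (nhds 0) := by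
      simpa using Real.tendsto_pow_mul_exp_neg_atTop_nhds_zero 1
    have tc : Tendsto (fun x : ℝ => a * x) atTop atTop :=
      Tendsto.const_mul_atTop ha tendsto_id
    have t2 : Tendsto (fun x : ℝ => (a*x) * Real.exp (-(a*x))) atTop (nhds 0) := t1.comp tc
    have t3 : Tendsto (fun x : ℝ => -(x / a) * Real.exp (-(a * x))) atTop (nhds 0) := by
      have := t2.const_mul (-(1/a^2))
      simp only [mul_zero] at this
      refine this.congr fun x => ?_
      field_simp
    have t4 : Tendsto (fun x : ℝ => (1 / a ^ 2) * Real.exp (-(a * x))) atTop (nhds 0) := by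
      have := (tendsto_exp_neg_atTop_nhds_zero.comp tc).const_mul (1/a^2)
      simpa using this
    simpa using t3.sub t4
  have := integral_Ioi_of_hasDerivAt_of_tendsto'
    (fun x hx => hderiv x hx) (aux_xexp_int ha) htend
  rw [this]
  simp
lemma key_int {z : ℂ} (hre : z.re < 0) (him : |z.im| < π) :
    ∫ ξ in Ioi (0:ℝ), (ξ:ℂ) / (1 + Complex.exp ((ξ:ℂ) - z)) = -Li2 (-Complex.exp z) := by
  set c : ℕ → ℂ := fun j => (-1)^j * (Complex.exp z)^(j+1) with hc
  set F : ℕ → ℝ → ℂ := fun j ξ => c j * (((ξ * Real.exp (-((j+1 : ℝ) * ξ))) : ℝ) : ℂ) with hFdef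
  have hja : ∀ j : ℕ, (0:ℝ) < (j+1 : ℝ) := fun j => by positivity
  have hint : ∀ j, IntegrableOn (F j) (Ioi 0) := by
    intro j
    exact (Complex.ofRealCLM.integrable_comp (aux_xexp_int (hja j))).const_mul _
  have hval : ∀ j, ∫ ξ in Ioi (0:ℝ), F j ξ = c j * ((1 / ((j:ℝ)+1)^2 : ℝ) : ℂ) := by
    intro j
    rw [hFdef]
    simp only []
    rw [MeasureTheory.integral_const_mul]
    congr 1
    rw [← aux_xexp_val (hja j)]
    exact integral_ofReal
  have hr : Real.exp z.re < 1 := Real.exp_lt_one_iff.mpr hre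
  have hr0 : 0 < Real.exp z.re := Real.exp_pos _
  have hnormc : ∀ j, ‖c j‖ = (Real.exp z.re)^(j+1) := by
    intro j
    simp [hc, norm_mul, norm_pow, Complex.norm_exp]
  have hnorm : Summable fun j => ∫ ξ in Ioi (0:ℝ), ‖F j ξ‖ := by
    have hcomp : ∀ j, (∫ ξ in Ioi (0:ℝ), ‖F j ξ‖) ≤ (Real.exp z.re)^(j+1) * (1/((j:ℝ)+1)^2) := by
      intro j
      have : ∫ ξ in Ioi (0:ℝ), ‖F j ξ‖ = ‖c j‖ * ∫ ξ in Ioi (0:ℝ), ξ * Real.exp (-((j+1:ℝ) * ξ)) := by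
        rw [← MeasureTheory.integral_const_mul]
        refine setIntegral_congr_fun measurableSet_Ioi fun ξ hξ => ?_
        rw [hFdef]
        simp only [norm_mul, Complex.norm_real, Real.norm_eq_abs]
        rw [abs_of_pos (mem_Ioi.mp hξ), abs_of_pos (Real.exp_pos _)]
      rw [this, hnormc j, aux_xexp_val (hja j)]
    refine Summable.of_nonneg_of_le (fun j => ?_) hcomp ?_
    · positivity
    · refine Summable.of_nonneg_of_le (fun j => by positivity) (fun j => ?_)
        (summable_geometric_of_lt_one hr0.le hr)
      calc (Real.exp z.re)^(j+1) * (1/((j:ℝ)+1)^2) ≤ (Real.exp z.re)^(j+1) * 1 := by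
            apply mul_le_mul_of_nonneg_left _ (by positivity)
            rw [div_le_one (by positivity)]
            nlinarith [Nat.cast_nonneg (α := ℝ) j]
        _ ≤ (Real.exp z.re)^j := by
            rw [mul_one, pow_succ]
            nlinarith [pow_nonneg hr0.le j, pow_le_one₀ hr0.le hr.le (n := j)]
  have hpt : ∀ ξ ∈ Ioi (0:ℝ), (ξ:ℂ) / (1 + Complex.exp ((ξ:ℂ) - z)) = ∑' j, F j ξ := by
    intro ξ hξ
    have hξ0 : (0:ℝ) < ξ := hξ
    set E : ℂ := Complex.exp (z - ξ) with hE
    have hEnorm : ‖E‖ < 1 := by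
      rw [hE, Complex.norm_exp]
      apply Real.exp_lt_one_iff.mpr
      simp only [Complex.sub_re, Complex.ofReal_re]
      linarith
    have hFT : ∀ j, F j ξ = ((ξ:ℂ) * E) * (-E)^j := by
      intro j
      rw [hFdef, hc]
      simp only []
      have h1 : E = Complex.exp z * Complex.exp (-(ξ:ℂ)) := by
        rw [hE, ← Complex.exp_add]; ring_nf
      have h2 : Complex.exp (-(((j:ℂ)+1) * (ξ:ℂ))) = (Complex.exp (-(ξ:ℂ)))^(j+1) := by
        rw [← Complex.exp_nat_mul]
        congr 1
        push_cast
        ring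
      push_cast
      rw [h2, h1, neg_pow]
      ring
    rw [tsum_congr hFT, tsum_mul_left, tsum_geometric_of_norm_lt_one (by rwa [norm_neg])]
    have hden1 : 1 + E ≠ 0 := by
      intro h
      have : E = -1 := by linear_combination h
      rw [this] at hEnorm; norm_num at hEnorm
    have hden2 : 1 + Complex.exp ((ξ:ℂ) - z) ≠ 0 := by
      apply aux_ne
      simp only [Complex.sub_im, Complex.ofReal_im, zero_sub, abs_neg]
      exact him
    have hEe : E * Complex.exp ((ξ:ℂ) - z) = 1 := by
      rw [hE, ← Complex.exp_add, show (z - (ξ:ℂ)) + ((ξ:ℂ) - z) = 0 by ring, Complex.exp_zero]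
    rw [sub_neg_eq_add, ← div_eq_mul_inv, div_eq_div_iff hden2 hden1]
    linear_combination (-(ξ:ℂ)) * hEe
  rw [setIntegral_congr_fun measurableSet_Ioi hpt,
    ← MeasureTheory.integral_tsum_of_summable_integral_norm hint hnorm]
  rw [tsum_congr hval]
  rw [Li2, ← tsum_neg]
  apply tsum_congr
  intro j
  rw [hc]
  simp only []
  push_cast
  rw [neg_pow, pow_succ]
  ring
end Aux

theorem stmt15 (θ : ℝ) (hθ : 0 < θ) (z : ℂ) (hre : z.re < 0) (him : |z.im| < π) :
    Integrable (fun ξ : ℝ =>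
      (Real.log (1 + Real.exp (θ * ξ)) : ℂ) / (1 + Complex.exp ((ξ : ℂ) - z))) ∧
    IntegrableOn (fun ξ : ℝ =>
      (Real.log (1 + Real.exp (-θ * ξ)) : ℂ) *
        (1 / (1 + Complex.exp ((ξ : ℂ) - z)) + 1 / (1 + Complex.exp (-(ξ : ℂ) - z))))
      (Set.Ioi 0) ∧
    (∫ ξ : ℝ, (Real.log (1 + Real.exp (θ * ξ)) : ℂ) / (1 + Complex.exp ((ξ : ℂ) - z))) =
      -(θ : ℂ) * Li2 (-Complex.exp z) +
        ∫ ξ in Set.Ioi (0 : ℝ), (Real.log (1 + Real.exp (-θ * ξ)) : ℂ) *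
          (1 / (1 + Complex.exp ((ξ : ℂ) - z)) + 1 / (1 + Complex.exp (-(ξ : ℂ) - z))) := by
  obtain ⟨δ, hδ0, hδ1, hδ⟩ := aux_lb (y := -z.im) (by rwa [abs_neg])
  set F : ℝ → ℂ := fun ξ => (Real.log (1 + Real.exp (θ * ξ)) : ℂ) / (1 + Complex.exp ((ξ:ℂ) - z))
    with hFdef
  set G2 : ℝ → ℂ := fun ξ =>
    (Real.log (1 + Real.exp (-θ * ξ)) : ℂ) / (1 + Complex.exp ((ξ:ℂ) - z)) with hG2def
  set G3 : ℝ → ℂ := fun ξ =>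
    (Real.log (1 + Real.exp (-θ * ξ)) : ℂ) / (1 + Complex.exp (-(ξ:ℂ) - z)) with hG3def
  -- basic facts
  have hne : ∀ w : ℂ, w.im = -z.im → 1 + Complex.exp w ≠ 0 := fun w hw =>
    aux_ne w (by rw [hw, abs_neg]; exact him)
  have hbound : ∀ w : ℂ, w.im = -z.im →
      ‖(1 + Complex.exp w)⁻¹‖ ≤ δ⁻¹ * Real.exp (-w.re) ∧ ‖(1 + Complex.exp w)⁻¹‖ ≤ δ⁻¹ := by
    intro w hw
    have h := hδ w hw
    have hex := Real.exp_pos w.re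
    constructor
    · rw [norm_inv]
      calc ‖1 + Complex.exp w‖⁻¹ ≤ (δ * Real.exp w.re)⁻¹ := by
            apply inv_anti₀ (by positivity)
            refine le_trans ?_ h
            exact mul_le_mul_of_nonneg_left (le_max_right _ _) hδ0.le
        _ = δ⁻¹ * Real.exp (-w.re) := by rw [mul_inv, Real.exp_neg]
    · rw [norm_inv]
      calc ‖1 + Complex.exp w‖⁻¹ ≤ (δ * 1)⁻¹ := by
            apply inv_anti₀ (by positivity)
            refine le_trans ?_ h
            exact mul_le_mul_of_nonneg_left (le_max_left _ _) hδ0.le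
        _ = δ⁻¹ := by rw [mul_one]
  have him1 : ∀ ξ : ℝ, ((ξ:ℂ) - z).im = -z.im := fun ξ => by simp
  have him2 : ∀ ξ : ℝ, (-(ξ:ℂ) - z).im = -z.im := fun ξ => by simp
  have hre1 : ∀ ξ : ℝ, ((ξ:ℂ) - z).re = ξ - z.re := fun ξ => by simp
  have hlognn : ∀ t : ℝ, ‖((Real.log (1 + Real.exp t)) : ℂ)‖ = Real.log (1 + Real.exp t) := by
    intro t
    rw [Complex.norm_real, Real.norm_eq_abs, abs_of_nonneg]
    exact Real.log_nonneg (by nlinarith [Real.exp_pos t])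
  have hlogle : ∀ t : ℝ, Real.log (1 + Real.exp t) ≤ Real.exp t := by
    intro t
    have := Real.log_le_sub_one_of_pos (x := 1 + Real.exp t) (by positivity)
    linarith
  have hloglin : ∀ t : ℝ, 0 ≤ t → Real.log (1 + Real.exp t) ≤ Real.log 2 + t := by
    intro t ht
    have h1 : (1:ℝ) + Real.exp t ≤ 2 * Real.exp t := by nlinarith [Real.one_le_exp ht]
    calc Real.log (1 + Real.exp t) ≤ Real.log (2 * Real.exp t) :=
          Real.log_le_log (by positivity) h1
      _ = Real.log 2 + t := by rw [Real.log_mul two_ne_zero (Real.exp_ne_zero t), Real.log_exp]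
  -- continuity
  have hcontD1 : Continuous fun ξ : ℝ => 1 + Complex.exp ((ξ:ℂ) - z) :=
    continuous_const.add (Complex.continuous_exp.comp (Complex.continuous_ofReal.sub
      continuous_const))
  have hcontD2 : Continuous fun ξ : ℝ => 1 + Complex.exp (-(ξ:ℂ) - z) :=
    continuous_const.add (Complex.continuous_exp.comp (Complex.continuous_ofReal.neg.sub
      continuous_const))
  have hcontlog : ∀ a : ℝ, Continuous fun ξ : ℝ => Real.log (1 + Real.exp (a * ξ)) := by
    intro a
    apply Continuous.log
    · exact continuous_const.add (Real.continuous_exp.comp (continuous_const.mul continuous_id))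
    · intro ξ; positivity
  have hcontF : Continuous F :=
    (Complex.continuous_ofReal.comp (hcontlog θ)).div hcontD1 fun ξ => hne _ (him1 ξ)
  have hcontG2 : Continuous G2 :=
    (Complex.continuous_ofReal.comp (hcontlog (-θ))).div hcontD1 fun ξ => hne _ (him1 ξ)
  have hcontG3 : Continuous G3 :=
    (Complex.continuous_ofReal.comp (hcontlog (-θ))).div hcontD2 fun ξ => hne _ (him2 ξ)
  -- integrability of G2, G3
  have hIG2 : IntegrableOn G2 (Ioi 0) := by
    refine Integrable.mono' ((exp_neg_integrableOn_Ioi 0 hθ).const_mul δ⁻¹)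
      hcontG2.aestronglyMeasurable.restrict ?_
    filter_upwards [ae_restrict_mem measurableSet_Ioi] with ξ hξ
    rw [hG2def]
    simp only [div_eq_mul_inv, norm_mul]
    rw [hlognn]
    calc Real.log (1 + Real.exp (-θ*ξ)) * ‖(1 + Complex.exp ((ξ:ℂ) - z))⁻¹‖
        ≤ Real.exp (-θ*ξ) * δ⁻¹ := by
          apply mul_le_mul (hlogle _) ((hbound _ (him1 ξ)).2) (norm_nonneg _) (Real.exp_pos _).le
      _ = δ⁻¹ * Real.exp (-θ*ξ) := by ring
  have hIG3 : IntegrableOn G3 (Ioi 0) := by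
    refine Integrable.mono' ((exp_neg_integrableOn_Ioi 0 hθ).const_mul δ⁻¹)
      hcontG3.aestronglyMeasurable.restrict ?_
    filter_upwards [ae_restrict_mem measurableSet_Ioi] with ξ hξ
    rw [hG3def]
    simp only [div_eq_mul_inv, norm_mul]
    rw [hlognn]
    calc Real.log (1 + Real.exp (-θ*ξ)) * ‖(1 + Complex.exp (-(ξ:ℂ) - z))⁻¹‖
        ≤ Real.exp (-θ*ξ) * δ⁻¹ := by
          apply mul_le_mul (hlogle _) ((hbound _ (him2 ξ)).2) (norm_nonneg _) (Real.exp_pos _).le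
      _ = δ⁻¹ * Real.exp (-θ*ξ) := by ring
  -- integrability of ξ/D1 on Ioi 0
  have hI4 : IntegrableOn (fun ξ : ℝ => (ξ:ℂ) / (1 + Complex.exp ((ξ:ℂ) - z))) (Ioi 0) := by
    refine Integrable.mono' ((aux_xexp_int one_pos).const_mul δ⁻¹)
      ((Complex.continuous_ofReal.div hcontD1 fun ξ =>
        hne _ (him1 ξ)).aestronglyMeasurable.restrict) ?_
    filter_upwards [ae_restrict_mem measurableSet_Ioi] with ξ hξ
    have hξ0 : (0:ℝ) < ξ := hξ
    simp only [div_eq_mul_inv, norm_mul, Complex.norm_real, Real.norm_eq_abs]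
    rw [abs_of_pos hξ0]
    have hb := (hbound _ (him1 ξ)).1
    rw [hre1 ξ] at hb
    calc ξ * ‖(1 + Complex.exp ((ξ:ℂ) - z))⁻¹‖ ≤ ξ * (δ⁻¹ * Real.exp (-(ξ - z.re))) :=
          mul_le_mul_of_nonneg_left hb hξ0.le
      _ ≤ ξ * (δ⁻¹ * Real.exp (-(1 * ξ))) := by
          apply mul_le_mul_of_nonneg_left _ hξ0.le
          apply mul_le_mul_of_nonneg_left _ (by positivity)
          apply Real.exp_le_exp.mpr
          linarith
      _ = δ⁻¹ * (ξ * Real.exp (-(1 * ξ))) := by ring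
  -- integrability of F on Ioi 0
  have hIoiF : IntegrableOn F (Ioi 0) := by
    have hg : IntegrableOn (fun ξ : ℝ =>
        δ⁻¹ * (Real.log 2 * Real.exp (-1 * ξ) + θ * (ξ * Real.exp (-(1 * ξ))))) (Ioi 0) :=
      (((exp_neg_integrableOn_Ioi 0 one_pos).const_mul (Real.log 2)).add
        ((aux_xexp_int one_pos).const_mul θ)).const_mul δ⁻¹
    refine Integrable.mono' hg hcontF.aestronglyMeasurable.restrict ?_
    filter_upwards [ae_restrict_mem measurableSet_Ioi] with ξ hξ
    have hξ0 : (0:ℝ) < ξ := hξ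
    rw [hFdef]
    simp only [div_eq_mul_inv, norm_mul]
    rw [hlognn]
    have hb := (hbound _ (him1 ξ)).1
    rw [hre1 ξ] at hb
    have hnum : Real.log (1 + Real.exp (θ*ξ)) ≤ Real.log 2 + θ*ξ :=
      hloglin _ (by positivity)
    have hnum0 : 0 ≤ Real.log (1 + Real.exp (θ*ξ)) :=
      Real.log_nonneg (by nlinarith [Real.exp_pos (θ*ξ)])
    have hlog2 : (0:ℝ) ≤ Real.log 2 := Real.log_nonneg one_le_two
    calc Real.log (1 + Real.exp (θ*ξ)) * ‖(1 + Complex.exp ((ξ:ℂ) - z))⁻¹‖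
        ≤ (Real.log 2 + θ*ξ) * (δ⁻¹ * Real.exp (-(ξ - z.re))) := by
          apply mul_le_mul hnum hb (norm_nonneg _) (by positivity)
      _ ≤ (Real.log 2 + θ*ξ) * (δ⁻¹ * Real.exp (-ξ)) := by
          apply mul_le_mul_of_nonneg_left _ (by positivity)
          apply mul_le_mul_of_nonneg_left _ (by positivity)
          apply Real.exp_le_exp.mpr
          linarith
      _ = δ⁻¹ * (Real.log 2 * Real.exp (-1 * ξ) + θ * (ξ * Real.exp (-(1 * ξ)))) := by
          norm_num
          ring
  -- integrability of F on Iic 0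
  have hIicF : IntegrableOn F (Iic 0) := by
    have hnegF : IntegrableOn (fun ξ : ℝ => F (-ξ)) (Ioi 0) := by
      refine Integrable.mono' ((exp_neg_integrableOn_Ioi 0 hθ).const_mul δ⁻¹)
        ((hcontF.comp continuous_neg).aestronglyMeasurable.restrict) ?_
      filter_upwards [ae_restrict_mem measurableSet_Ioi] with ξ hξ
      rw [hFdef]
      simp only [div_eq_mul_inv, norm_mul]
      rw [hlognn]
      calc Real.log (1 + Real.exp (θ*(-ξ))) * ‖(1 + Complex.exp (((-ξ:ℝ):ℂ) - z))⁻¹‖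
          ≤ Real.exp (θ*(-ξ)) * δ⁻¹ := by
            apply mul_le_mul (hlogle _) ((hbound _ (by simp)).2) (norm_nonneg _)
              (Real.exp_pos _).le
        _ = δ⁻¹ * Real.exp (-θ*ξ) := by rw [mul_comm]; ring_nf
    have hnegF' : IntegrableOn (fun ξ : ℝ => F (-ξ)) (Ici 0) :=
      (integrableOn_Ici_iff_integrableOn_Ioi (hb := enorm_ne_top)).mpr hnegF
    have h' : IntegrableOn (F ∘ Neg.neg) (Neg.neg ⁻¹' (Iic 0)) := by
      have : (Neg.neg ⁻¹' (Iic (0:ℝ))) = Ici 0 := by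
        ext x; simp
      rw [this]
      exact hnegF'
    exact ((Measure.measurePreserving_neg _).integrableOn_comp_preimage
      (Homeomorph.neg ℝ).measurableEmbedding).1 h'
  have hF : Integrable F := by
    have h := hIicF.union hIoiF
    rw [Iic_union_Ioi] at h
    exact integrableOn_univ.mp h
  -- conjunct 2
  have heq : (fun ξ : ℝ => (Real.log (1 + Real.exp (-θ * ξ)) : ℂ) *
      (1 / (1 + Complex.exp ((ξ:ℂ) - z)) + 1 / (1 + Complex.exp (-(ξ:ℂ) - z))))
      = fun ξ => G2 ξ + G3 ξ := by
    funext ξ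
    rw [hG2def, hG3def]
    simp only [mul_add, mul_one_div]
  refine ⟨hF, ?_, ?_⟩
  · rw [heq]; exact hIG2.add hIG3
  -- the identity
  have step1 : (∫ ξ : ℝ, F ξ) = (∫ ξ in Iic (0:ℝ), F ξ) + ∫ ξ in Ioi (0:ℝ), F ξ :=
    (intervalIntegral.integral_Iic_add_Ioi hF.integrableOn hF.integrableOn).symm
  have stepA : (∫ ξ in Iic (0:ℝ), F ξ) = ∫ ξ in Ioi (0:ℝ), G3 ξ := by
    have h := integral_comp_neg_Ioi (0:ℝ) F
    rw [neg_zero] at h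
    rw [← h]
    refine setIntegral_congr_fun measurableSet_Ioi fun ξ _ => ?_
    rw [hFdef, hG3def]
    simp only [mul_neg, neg_mul, Complex.ofReal_neg]
  have stepB : (∫ ξ in Ioi (0:ℝ), F ξ)
      = (θ:ℂ) * (∫ ξ in Ioi (0:ℝ), (ξ:ℂ) / (1 + Complex.exp ((ξ:ℂ) - z)))
        + ∫ ξ in Ioi (0:ℝ), G2 ξ := by
    have h1 : ∀ ξ ∈ Ioi (0:ℝ), F ξ
        = (θ:ℂ) * ((ξ:ℂ) / (1 + Complex.exp ((ξ:ℂ) - z))) + G2 ξ := by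
      intro ξ _
      have hsplit : Real.log (1 + Real.exp (θ*ξ)) = θ*ξ + Real.log (1 + Real.exp (-θ*ξ)) := by
        have h2 : (1:ℝ) + Real.exp (θ*ξ) = Real.exp (θ*ξ) * (1 + Real.exp (-θ*ξ)) := by
          rw [mul_add, mul_one, ← Real.exp_add]
          norm_num
          ring
        rw [h2, Real.log_mul (Real.exp_ne_zero _) (by positivity), Real.log_exp]
      rw [hFdef, hG2def]
      simp only []
      rw [hsplit]
      push_cast
      rw [add_div]
      ring
    rw [setIntegral_congr_fun measurableSet_Ioi h1,
      integral_add ((hI4.const_mul _)) hIG2, MeasureTheory.integral_const_mul]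
  rw [step1, stepA, stepB, key_int hre him, heq,
    integral_add hIG2 hIG3]
  ring
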